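/- With D_t, N as in Lemma 1 and Ĥ_t(K)^{-1} = D_t^{-1/2} ∑_{i=0}^{K} (D_t^{-1/2} N D_t^{-1/2})^i D_t^{-1/2}, it holds that ‖Ĥ_t(K)‖ ≤ M_f + ε + (1 + 2(n-1))/μ. -/

import Mathlib

open Matrix Kronecker Finset

/-- The positive semidefinite square root of a positive semidefinite matrix
(the definition `Matrix.PosSemidef.sqrt` of Mathlib, December 2024, since removed). -/
noncomputable def Matrix.PosSemidef.sqrt {n 𝕜 : Type*} [Fintype n] [DecidableEq n] [RCLike 𝕜]
    [PartialOrder 𝕜]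
    {A : Matrix n n 𝕜} (hA : A.PosSemidef) : Matrix n n 𝕜 :=
  hA.1.eigenvectorUnitary.1 * diagonal ((↑) ∘ (√·) ∘ hA.1.eigenvalues) *
  (star hA.1.eigenvectorUnitary : Matrix n n 𝕜)

lemma Matrix.PosSemidef.sqrt_mul_self {n : Type*} [Fintype n] [DecidableEq n]
    {A : Matrix n n ℝ} (hA : A.PosSemidef) : hA.sqrt * hA.sqrt = A := by
  have hU : (star hA.1.eigenvectorUnitary : Matrix n n ℝ) * hA.1.eigenvectorUnitary.1 = 1 :=
    Unitary.star_mul_self_of_mem hA.1.eigenvectorUnitary.2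
  have hE : diagonal (RCLike.ofReal ∘ (√·) ∘ hA.1.eigenvalues : n → ℝ)
      * diagonal (RCLike.ofReal ∘ (√·) ∘ hA.1.eigenvalues : n → ℝ) = diagonal (RCLike.ofReal ∘ hA.1.eigenvalues : n → ℝ) := by
    rw [diagonal_mul_diagonal]
    congr 1
    funext i
    simp only [Function.comp, RCLike.ofReal_real_eq_id, id]
    exact Real.mul_self_sqrt (hA.eigenvalues_nonneg i)
  conv_rhs => rw [hA.1.spectral_theorem, Unitary.conjStarAlgAut_apply]
  unfold Matrix.PosSemidef.sqrt
  rw [← hE]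
  simp only [Matrix.mul_assoc]
  rw [← Matrix.mul_assoc (star hA.1.eigenvectorUnitary : Matrix n n ℝ), hU, Matrix.one_mul]

lemma Matrix.PosSemidef.posSemidef_sqrt {n : Type*} [Fintype n] [DecidableEq n]
    {A : Matrix n n ℝ} (hA : A.PosSemidef) : hA.sqrt.PosSemidef := by
  have hE : (diagonal (RCLike.ofReal ∘ (√·) ∘ hA.1.eigenvalues : n → ℝ)).PosSemidef :=
    Matrix.PosSemidef.diagonal fun i => by simp [Real.sqrt_nonneg]
  have := hE.mul_mul_conjTranspose_same (hA.1.eigenvectorUnitary : Matrix n n ℝ)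
  unfold Matrix.PosSemidef.sqrt
  rwa [← Matrix.star_eq_conjTranspose] at this

section Helpers

variable {m : Type*} [Fintype m] [DecidableEq m]

omit [DecidableEq m] in
lemma aux_psd_smul {c : ℝ} {A : Matrix m m ℝ} (hc : 0 ≤ c) (hA : A.PosSemidef) :
    (c • A).PosSemidef := by
  refine .of_dotProduct_mulVec_nonneg ?_ fun x => ?_
  · unfold Matrix.IsHermitian
    rw [conjTranspose_smul, hA.1.eq]
    simp
  · rw [smul_mulVec, dotProduct_smul, smul_eq_mul]
    exact mul_nonneg hc (hA.dotProduct_mulVec_nonneg x)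

omit [DecidableEq m] in
lemma aux_psd_sum {ι : Type*} (s : Finset ι) (f : ι → Matrix m m ℝ)
    (h : ∀ i ∈ s, (f i).PosSemidef) : (∑ i ∈ s, f i).PosSemidef :=
  Finset.sum_induction f _ (fun _ _ ha hb => ha.add hb) .zero h

lemma aux_kron_one_psd {d : ℕ} {M : Matrix m m ℝ} (hM : M.PosSemidef) :
    (M ⊗ₖ (1 : Matrix (Fin d) (Fin d) ℝ)).PosSemidef := by
  obtain ⟨B, rfl⟩ : ∃ B : Matrix m m ℝ, M = Bᴴ * B :=
    ⟨hM.sqrt, by rw [hM.posSemidef_sqrt.1.eq, hM.sqrt_mul_self]⟩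
  have h1 : (B ⊗ₖ (1 : Matrix (Fin d) (Fin d) ℝ))ᴴ = Bᴴ ⊗ₖ (1 : Matrix (Fin d) (Fin d) ℝ) := by
    ext ⟨i,a⟩ ⟨j,b⟩
    simp [conjTranspose_apply, kroneckerMap_apply, one_apply, eq_comm]
  have : (Bᴴ * B) ⊗ₖ (1 : Matrix (Fin d) (Fin d) ℝ)
      = (B ⊗ₖ (1 : Matrix (Fin d) (Fin d) ℝ))ᴴ * (B ⊗ₖ (1 : Matrix (Fin d) (Fin d) ℝ)) := by
    rw [h1, ← mul_kronecker_mul, one_mul]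
  rw [this]
  exact posSemidef_conjTranspose_mul_self _

lemma aux_blockdiag_psd {n d : ℕ} (Q : Fin n → Matrix (Fin d) (Fin d) ℝ)
    (hQ : ∀ i, (Q i).PosSemidef) :
    (Matrix.of fun (p q : Fin n × Fin d) => if p.1 = q.1 then Q p.1 p.2 q.2 else 0).PosSemidef := by
  refine .of_dotProduct_mulVec_nonneg ?_ fun x => ?_
  · ext ⟨i,a⟩ ⟨j,b⟩
    simp only [conjTranspose_apply, of_apply, star_trivial]
    by_cases h : i = j
    · subst h
      simp only [if_pos rfl]
      calc Q i b a = (Q i)ᴴ a b := by simp [conjTranspose_apply]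
      _ = Q i a b := by rw [(hQ i).1.eq]
    · rw [if_neg h, if_neg (Ne.symm h)]
  · have expand : star x ⬝ᵥ ((Matrix.of fun (p q : Fin n × Fin d) =>
        if p.1 = q.1 then Q p.1 p.2 q.2 else 0) *ᵥ x)
        = ∑ i : Fin n, (star fun a => x (i,a)) ⬝ᵥ (Q i *ᵥ fun a => x (i,a)) := by
      simp only [dotProduct, mulVec, of_apply, star_trivial, Fintype.sum_prod_type]
      refine Finset.sum_congr rfl fun i _ => Finset.sum_congr rfl fun a _ => ?_
      congr 1
      rw [Finset.sum_eq_single i]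
      · simp
      · intro j _ hj
        simp [Ne.symm hj]
      · simp
    rw [expand]
    exact Finset.sum_nonneg fun i _ => (hQ i).dotProduct_mulVec_nonneg _

lemma aux_signless_psd {n : ℕ} (G : SimpleGraph (Fin n)) [DecidableRel G.Adj] :
    (G.degMatrix ℝ + G.adjMatrix ℝ).PosSemidef := by
  refine .of_dotProduct_mulVec_nonneg ?_ fun x => ?_
  · rw [Matrix.IsHermitian, conjTranspose_eq_transpose_of_trivial]
    exact ((G.isSymm_degMatrix ℝ).add (SimpleGraph.isSymm_adjMatrix G))
  · rw [star_trivial]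
    have key : x ⬝ᵥ ((G.degMatrix ℝ + G.adjMatrix ℝ) *ᵥ x)
        = (∑ i, ∑ j, if G.Adj i j then (x i + x j)^2 else 0) / 2 := by
      simp_rw [add_mulVec, dotProduct_add, SimpleGraph.dotProduct_mulVec_degMatrix,
        SimpleGraph.dotProduct_mulVec_adjMatrix, ← sum_add_distrib,
        SimpleGraph.degree_eq_sum_if_adj, sum_mul, ite_mul, one_mul, zero_mul,
        ← sum_add_distrib, ite_add_ite, add_zero]
      rw [← add_self_div_two (∑ i : Fin n, ∑ j : Fin n, _)]
      conv_lhs => enter [1,2,2,i,2,j]; rw [if_congr (SimpleGraph.adj_comm G i j) rfl rfl]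
      conv_lhs => enter [1,2]; rw [Finset.sum_comm]
      simp_rw [← sum_add_distrib, ite_add_ite]
      congr 2 with i
      congr 2 with j
      ring_nf
    rw [key]
    positivity

lemma aux_norm_le_of_psd_le {A : Matrix m m ℝ} {c : ℝ}
    (hc : 0 ≤ c) (hA : A.PosSemidef) (hcA : ((c • (1:Matrix m m ℝ)) - A).PosSemidef) :
    ‖toEuclideanCLM (𝕜 := ℝ) A‖ ≤ c := by
  set B := (c • (1:Matrix m m ℝ)) - A with hB
  set V := hcA.sqrt with hV
  have hV2 : V * V = B := hcA.sqrt_mul_self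
  have hVB : V * B = B * V := by rw [← hV2, ← mul_assoc, mul_assoc]
  have hVA : V * A = A * V := by
    have h1 : V * ((c • (1:Matrix m m ℝ)) - A) = ((c • (1:Matrix m m ℝ)) - A) * V := hVB
    rw [mul_sub, sub_mul, Matrix.mul_smul, Matrix.smul_mul, mul_one, one_mul] at h1
    linear_combination (norm := noncomm_ring) -h1
  have hkey : (c^2) • (1:Matrix m m ℝ) - A * A
      = V * ((c • (1:Matrix m m ℝ)) + A) * V := by
    have hVW : V * ((c • (1:Matrix m m ℝ)) + A) = ((c • (1:Matrix m m ℝ)) + A) * V := by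
      rw [mul_add, add_mul, Matrix.mul_smul, Matrix.smul_mul, mul_one, one_mul, hVA]
    rw [hVW, mul_assoc, hV2, hB]
    simp only [add_mul, mul_sub, Matrix.smul_mul, Matrix.mul_smul, smul_smul, one_mul,
      mul_one, smul_sub, ← pow_two, smul_pow, one_pow]
    abel
  have hAA : ((c^2) • (1:Matrix m m ℝ) - A * A).PosSemidef := by
    rw [hkey]
    have hW : ((c • (1:Matrix m m ℝ)) + A).PosSemidef := (aux_psd_smul hc .one).add hA
    have := hW.mul_mul_conjTranspose_same V
    rwa [hcA.posSemidef_sqrt.1.eq] at this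
  refine ContinuousLinearMap.opNorm_le_bound _ hc fun x => ?_
  set y : m → ℝ := WithLp.equiv 2 (m → ℝ) x with hy
  have happ : WithLp.equiv 2 (m → ℝ) (toEuclideanCLM (𝕜 := ℝ) A x) = A *ᵥ y := by
    exact ofLp_toEuclideanCLM A x
  have hnx : ‖x‖ = Real.sqrt (∑ i, (y i)^2) := by
    rw [EuclideanSpace.norm_eq]
    congr 1
    refine Finset.sum_congr rfl fun i _ => ?_
    rw [Real.norm_eq_abs, sq_abs]
    rfl
  have hnAx : ‖toEuclideanCLM (𝕜 := ℝ) A x‖ = Real.sqrt (∑ i, ((A *ᵥ y) i)^2) := by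
    rw [EuclideanSpace.norm_eq]
    congr 1
    refine Finset.sum_congr rfl fun i _ => ?_
    rw [Real.norm_eq_abs, sq_abs, ← happ]
    rfl
  have hq : ∑ i, ((A *ᵥ y) i)^2 ≤ c^2 * ∑ i, (y i)^2 := by
    have h0 := hAA.dotProduct_mulVec_nonneg y
    rw [star_trivial, sub_mulVec, dotProduct_sub, smul_mulVec, one_mulVec,
      dotProduct_smul, smul_eq_mul] at h0
    have h3 : A *ᵥ y = y ᵥ* A := by
      rw [← Matrix.mulVec_transpose]
      congr 1
      rw [← conjTranspose_eq_transpose_of_trivial, hA.1.eq]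
    have h1 : ∑ i, ((A *ᵥ y) i)^2 = y ⬝ᵥ ((A * A) *ᵥ y) := by
      have h2 : ∑ i, ((A *ᵥ y) i)^2 = (A *ᵥ y) ⬝ᵥ (A *ᵥ y) := by
        simp [dotProduct, sq]
      rw [h2]
      nth_rewrite 1 [h3]
      rw [← Matrix.dotProduct_mulVec, Matrix.mulVec_mulVec]
    have h4 : ∑ i, (y i)^2 = y ⬝ᵥ y := by simp [dotProduct, sq]
    rw [h1, h4]
    linarith
  rw [hnAx, hnx]
  have h5 : c * Real.sqrt (∑ i, (y i)^2) = Real.sqrt (c^2 * ∑ i, (y i)^2) := by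
    rw [Real.sqrt_mul (sq_nonneg c), Real.sqrt_sq hc]
  rw [h5]
  exact Real.sqrt_le_sqrt hq


lemma aux_block_sub {n d : ℕ} (Q : Fin n → Matrix (Fin d) (Fin d) ℝ) (Mf : ℝ) :
    Mf • (1 : Matrix (Fin n × Fin d) (Fin n × Fin d) ℝ)
      - Matrix.of (fun p q => if p.1 = q.1 then Q p.1 p.2 q.2 else 0)
    = Matrix.of (fun (p q : Fin n × Fin d) =>
        if p.1 = q.1 then (Mf • (1 : Matrix (Fin d) (Fin d) ℝ) - Q p.1) p.2 q.2 else 0) := by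
  ext ⟨i,a⟩ ⟨j,b⟩
  simp only [Matrix.sub_apply, Matrix.smul_apply, Matrix.one_apply, Matrix.of_apply,
    smul_eq_mul, Prod.mk.injEq, ite_and]
  split_ifs <;> ring

lemma aux_decomp {n d : ℕ} (l : Fin n) (f : Fin n → ℝ)
    (H : Matrix (Fin n × Fin d) (Fin n × Fin d) ℝ) (μ ε Mf : ℝ) :
    (Mf + ε + (1 + 2 * ((n:ℝ) - 1)) / μ) • (1 : Matrix (Fin n × Fin d) (Fin n × Fin d) ℝ)
      - (H + μ⁻¹ • (Matrix.single l l 1 ⊗ₖ (1 : Matrix (Fin d) (Fin d) ℝ))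
          + (2 / μ) • ((Matrix.diagonal f) ⊗ₖ (1 : Matrix (Fin d) (Fin d) ℝ))
          + ε • (1 : Matrix (Fin n × Fin d) (Fin n × Fin d) ℝ))
    = (Mf • (1 : Matrix (Fin n × Fin d) (Fin n × Fin d) ℝ) - H)
      + μ⁻¹ • (((1 - Matrix.single l l 1) ⊗ₖ (1 : Matrix (Fin d) (Fin d) ℝ)))
      + (2/μ) • ((Matrix.diagonal (fun i => ((n:ℝ)-1) - f i))
          ⊗ₖ (1 : Matrix (Fin d) (Fin d) ℝ)) := by
  ext ⟨i,a⟩ ⟨j,b⟩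
  simp only [Matrix.add_apply, Matrix.sub_apply, Matrix.smul_apply, Matrix.one_apply,
    kroneckerMap_apply, Matrix.single, Matrix.of_apply, Matrix.diagonal_apply,
    smul_eq_mul, Prod.mk.injEq, ite_and]
  split_ifs <;> ring

end Helpers

/-- Bound on the approximate Hessian: with D_t, N as in Lemma 1 and
Ĥ_t(K)⁻¹ = D_t^{-1/2} ∑_{i=0}^K (D_t^{-1/2} N D_t^{-1/2})^i D_t^{-1/2},
one has ‖Ĥ_t(K)‖ ≤ M_f + ε + (1 + 2(n−1))/μ. -/
theorem approx_hessian_norm_bound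
    (n d : ℕ) (hn : 2 ≤ n) (G : SimpleGraph (Fin n)) [DecidableRel G.Adj]
    (hG : G.Connected) (l : Fin n) (K : ℕ)
    (μ ε mf Mf : ℝ) (hμ : 0 < μ) (hε : 0 < ε) (hmf : 0 < mf) (hmM : mf ≤ Mf)
    (Q : Fin n → Matrix (Fin d) (Fin d) ℝ)
    (hQsym : ∀ i, (Q i).IsHermitian)
    (hQlow : ∀ i, (Q i - mf • (1 : Matrix (Fin d) (Fin d) ℝ)).PosSemidef)
    (hQhigh : ∀ i, (Mf • (1 : Matrix (Fin d) (Fin d) ℝ) - Q i).PosSemidef)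
    (HessF : Matrix (Fin n × Fin d) (Fin n × Fin d) ℝ)
    (hHessF : HessF = Matrix.of fun p q => if p.1 = q.1 then Q p.1 p.2 q.2 else 0)
    (Ldia : Matrix (Fin n) (Fin n) ℝ)
    (hLdia : Ldia = Matrix.diagonal (fun i => (G.degree i : ℝ)))
    (Loff : Matrix (Fin n) (Fin n) ℝ) (hLoff : Loff = G.lapMatrix ℝ - Ldia)
    (D N : Matrix (Fin n × Fin d) (Fin n × Fin d) ℝ)
    (hDdef : D = HessF
      + μ⁻¹ • (Matrix.single l l 1 ⊗ₖ (1 : Matrix (Fin d) (Fin d) ℝ))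
      + (2 / μ) • (Ldia ⊗ₖ (1 : Matrix (Fin d) (Fin d) ℝ))
      + ε • (1 : Matrix (Fin n × Fin d) (Fin n × Fin d) ℝ))
    (hNdef : N = μ⁻¹ • ((Ldia - Loff) ⊗ₖ (1 : Matrix (Fin d) (Fin d) ℝ)))
    (hD : D.PosSemidef)
    (Hhatinv : Matrix (Fin n × Fin d) (Fin n × Fin d) ℝ)
    (hHhatinv : Hhatinv = (hD.sqrt)⁻¹ *
      (∑ i ∈ Finset.range (K + 1), ((hD.sqrt)⁻¹ * N * (hD.sqrt)⁻¹) ^ i) * (hD.sqrt)⁻¹) :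
    ‖toEuclideanCLM (𝕜 := ℝ) Hhatinv⁻¹‖ ≤ Mf + ε + (1 + 2 * ((n : ℝ) - 1)) / μ := by
  classical
  set c : ℝ := Mf + ε + (1 + 2 * ((n : ℝ) - 1)) / μ with hc
  have hn2 : (2:ℝ) ≤ (n:ℝ) := by exact_mod_cast hn
  have hc0 : 0 ≤ c := by
    have h1 : 0 ≤ (1 + 2 * ((n : ℝ) - 1)) / μ := by
      apply div_nonneg _ hμ.le
      linarith
    rw [hc]
    linarith
  -- basic PSD building blocks
  have hQpsd : ∀ i, (Q i).PosSemidef := by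
    intro i
    have := (hQlow i).add (aux_psd_smul hmf.le (Matrix.PosSemidef.one))
    rwa [sub_add_cancel] at this
  have hHpsd : HessF.PosSemidef := by
    rw [hHessF]; exact aux_blockdiag_psd Q hQpsd
  have hEdiag : Matrix.single l l (1:ℝ)
      = Matrix.diagonal (fun i => if i = l then 1 else 0) := by
    ext i j
    by_cases hi : i = l <;> by_cases hj : j = l <;>
      simp [Matrix.single, Matrix.diagonal_apply, hi, hj] <;> aesop
  have hEpsd : (Matrix.single l l (1:ℝ)).PosSemidef := by
    rw [hEdiag]
    refine Matrix.PosSemidef.diagonal fun i => ?_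
    dsimp only
    split_ifs <;> norm_num
  have hLdiaPsd : Ldia.PosSemidef := by
    rw [hLdia]
    exact Matrix.PosSemidef.diagonal fun i => by positivity
  have hDpd : D.PosDef := by
    rw [hDdef]
    refine Matrix.PosDef.posSemidef_add ?_ ?_
    · exact (hHpsd.add (aux_psd_smul (by positivity) (aux_kron_one_psd hEpsd))).add
        (aux_psd_smul (by positivity) (aux_kron_one_psd hLdiaPsd))
    · rw [smul_one_eq_diagonal]
      exact Matrix.posDef_diagonal_iff.mpr fun _ => hε
  set R := hD.sqrt with hRdef
  have hRH : Rᴴ = R := hD.posSemidef_sqrt.1.eq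
  have hRR : R * R = D := hD.sqrt_mul_self
  have hRdet : IsUnit R.det := by
    have hdet : R.det * R.det = D.det := by rw [← det_mul, hRR]
    refine isUnit_iff_ne_zero.mpr fun h0 => ?_
    rw [h0, mul_zero] at hdet
    exact absurd hdet.symm (ne_of_gt hDpd.det_pos)
  -- N is PSD
  have hsg : Ldia - Loff = G.degMatrix ℝ + G.adjMatrix ℝ := by
    rw [hLoff, hLdia, SimpleGraph.lapMatrix, SimpleGraph.degMatrix]
    abel
  have hNpsd : N.PosSemidef := by
    rw [hNdef, hsg]
    exact aux_psd_smul (by positivity) (aux_kron_one_psd (aux_signless_psd G))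
  set S : Matrix (Fin n × Fin d) (Fin n × Fin d) ℝ := R⁻¹ * N * R⁻¹ with hSdef
  have hRinvH : (R⁻¹)ᴴ = R⁻¹ := by rw [conjTranspose_nonsing_inv, hRH]
  have hSpsd : S.PosSemidef := by
    have := hNpsd.conjTranspose_mul_mul_same (R⁻¹)
    rwa [hRinvH] at this
  set T : Matrix (Fin n × Fin d) (Fin n × Fin d) ℝ := ∑ i ∈ Finset.range (K + 1), S ^ i
    with hTdef
  set P : Matrix (Fin n × Fin d) (Fin n × Fin d) ℝ := ∑ i ∈ Finset.range K, S ^ (i + 1)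
    with hPdef
  have hPpsd : P.PosSemidef := aux_psd_sum _ _ fun i _ => hSpsd.pow (i+1)
  have hTP : T = P + 1 := by
    rw [hTdef, Finset.sum_range_succ']
    simp [hPdef]
  have hTpd : T.PosDef := by
    rw [hTP]
    exact Matrix.PosDef.posSemidef_add hPpsd Matrix.PosDef.one
  have hTdet : IsUnit T.det := isUnit_iff_ne_zero.mpr hTpd.det_pos.ne'
  set M : Matrix (Fin n × Fin d) (Fin n × Fin d) ℝ := R * T⁻¹ * R with hMdef
  have hinv : Hhatinv⁻¹ = M := by
    apply Matrix.inv_eq_right_inv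
    rw [hHhatinv]
    have e1 : R⁻¹ * (∑ i ∈ Finset.range (K + 1), (R⁻¹ * N * R⁻¹) ^ i) * R⁻¹ * (R * T⁻¹ * R)
        = R⁻¹ * (T * ((R⁻¹ * R) * (T⁻¹ * R))) := by
      rw [hTdef, hSdef]
      noncomm_ring
    rw [e1, Matrix.nonsing_inv_mul _ hRdet, one_mul, ← Matrix.mul_assoc T,
      Matrix.mul_nonsing_inv _ hTdet, one_mul, Matrix.nonsing_inv_mul _ hRdet]
  have hTipsd : (T⁻¹).PosSemidef := hTpd.inv.posSemidef
  set U := hTipsd.sqrt with hUdef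
  have hUH : Uᴴ = U := hTipsd.posSemidef_sqrt.1.eq
  have hU2 : U * U = T⁻¹ := hTipsd.sqrt_mul_self
  have hUTi : U * T⁻¹ = T⁻¹ * U := by
    rw [← hU2, mul_assoc, ← mul_assoc]
  have hUT : U * T = T * U := by
    have h2 : T * (U * T⁻¹) = T * (T⁻¹ * U) := by rw [hUTi]
    rw [← Matrix.mul_assoc, ← Matrix.mul_assoc, Matrix.mul_nonsing_inv _ hTdet, one_mul] at h2
    have h3 := congrArg (· * T) h2
    rw [Matrix.mul_assoc (T * U), Matrix.nonsing_inv_mul _ hTdet, mul_one] at h3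
    exact h3.symm
  have hone : ((1 : Matrix (Fin n × Fin d) (Fin n × Fin d) ℝ) - T⁻¹).PosSemidef := by
    have hTm1 : T - 1 = P := by rw [hTP, add_sub_cancel_right]
    have hid : (1 : Matrix (Fin n × Fin d) (Fin n × Fin d) ℝ) - T⁻¹ = Uᴴ * (T - 1) * U := by
      rw [hUH, mul_sub, sub_mul, mul_one, hU2]
      rw [hUT, Matrix.mul_assoc, hU2, Matrix.mul_nonsing_inv _ hTdet]
    rw [hid]
    exact (hTm1 ▸ hPpsd).conjTranspose_mul_mul_same U
  have hDM : (D - M).PosSemidef := by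
    have hDMeq : D - M = R * ((1 : Matrix (Fin n × Fin d) (Fin n × Fin d) ℝ) - T⁻¹) * R := by
      rw [mul_sub, sub_mul, mul_one, hRR, hMdef]
    rw [hDMeq]
    have := hone.mul_mul_conjTranspose_same R
    rwa [hRH] at this
  have hMpsd : M.PosSemidef := by
    have := hTipsd.mul_mul_conjTranspose_same R
    rwa [hRH] at this
  -- the bound c • 1 - D is PSD
  have hMfHess : (Mf • (1 : Matrix (Fin n × Fin d) (Fin n × Fin d) ℝ) - HessF).PosSemidef := by
    rw [hHessF, aux_block_sub Q Mf]
    exact aux_blockdiag_psd _ hQhigh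
  have hdeg : ∀ i : Fin n, (G.degree i : ℝ) ≤ (n:ℝ) - 1 := by
    intro i
    have := G.degree_lt_card_verts i
    rw [Fintype.card_fin] at this
    have h2 : (G.degree i : ℝ) < (n : ℝ) := by exact_mod_cast this
    have h3 : (G.degree i : ℝ) + 1 ≤ (n : ℝ) := by
      have := this
      exact_mod_cast Nat.succ_le_of_lt this
    linarith
  have hdecomp : c • (1 : Matrix (Fin n × Fin d) (Fin n × Fin d) ℝ) - D
      = (Mf • (1 : Matrix (Fin n × Fin d) (Fin n × Fin d) ℝ) - HessF)
        + μ⁻¹ • (((1 - Matrix.single l l 1) ⊗ₖ (1 : Matrix (Fin d) (Fin d) ℝ)))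
        + (2/μ) • ((Matrix.diagonal (fun i => ((n:ℝ)-1) - (G.degree i : ℝ)))
            ⊗ₖ (1 : Matrix (Fin d) (Fin d) ℝ)) := by
    rw [hDdef, hLdia, hc]
    exact aux_decomp l _ HessF μ ε Mf
  have hcD : (c • (1 : Matrix (Fin n × Fin d) (Fin n × Fin d) ℝ) - D).PosSemidef := by
    rw [hdecomp]
    refine (hMfHess.add (aux_psd_smul (by positivity) (aux_kron_one_psd ?_))).add
      (aux_psd_smul (by positivity) (aux_kron_one_psd ?_))
    · rw [hEdiag]
      have : (1 : Matrix (Fin n) (Fin n) ℝ) - Matrix.diagonal (fun i => if i = l then 1 else 0)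
          = Matrix.diagonal (fun i => if i = l then 0 else 1) := by
        ext i j
        by_cases hij : i = j
        · subst hij
          by_cases hl : i = l <;>
            simp [Matrix.sub_apply, Matrix.one_apply, Matrix.diagonal_apply, hl]
        · simp [Matrix.sub_apply, Matrix.one_apply, Matrix.diagonal_apply, hij]
      rw [this]
      refine Matrix.PosSemidef.diagonal fun i => ?_
      simp only [Pi.zero_apply]
      split_ifs <;> norm_num
    · refine Matrix.PosSemidef.diagonal fun i => ?_
      simp only [Pi.zero_apply]
      linarith [hdeg i]
  have hcM : (c • (1 : Matrix (Fin n × Fin d) (Fin n × Fin d) ℝ) - M).PosSemidef := by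
    have heq : c • (1 : Matrix (Fin n × Fin d) (Fin n × Fin d) ℝ) - M
        = (c • (1 : Matrix (Fin n × Fin d) (Fin n × Fin d) ℝ) - D) + (D - M) :=
      (sub_add_sub_cancel _ _ _).symm
    rw [heq]
    exact hcD.add hDM
  rw [hinv]
  exact aux_norm_le_of_psd_le hc0 hMpsd hcM
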